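/- In the exterior algebra of ℝ⁷, let β = c₁·e₂∧e₃ + c₂·e₄∧e₅ + c₃·e₆∧e₇ for real numbers c₁, c₂, c₃, and let ψ = e₄∧e₅∧e₆∧e₇ + e₂∧e₃∧e₆∧e₇ + e₂∧e₃∧e₄∧e₅ + e₁∧e₃∧e₅∧e₇ − e₁∧e₃∧e₄∧e₆ − e₁∧e₂∧e₅∧e₆ − e₁∧e₂∧e₄∧e₇. Then β∧β∧β = 6·(β∧ψ) if and only if c₁ + c₂ + c₃ = c₁·c₂·c₃. (The computation underlying the equivalence (1) ⇔ (3) of Lemma 5.16) -/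

import Mathlib

set_option maxHeartbeats 1000000


/-- The images of the standard basis of `ℝ⁷` in the exterior algebra; `e i`
corresponds to `e_{i+1}` in the paper's notation. -/
noncomputable def e (i : Fin 7) : ExteriorAlgebra ℝ (Fin 7 → ℝ) :=
  ExteriorAlgebra.ι ℝ (Pi.single i 1)

lemma e_mul_self (i : Fin 7) : e i * e i = 0 := ExteriorAlgebra.ι_sq_zero _

lemma e_mul_self' (i : Fin 7) (x : ExteriorAlgebra ℝ (Fin 7 → ℝ)) :
    e i * (e i * x) = 0 := by rw [← mul_assoc, e_mul_self, zero_mul]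

lemma e_swap {i j : Fin 7} (_ : j < i) : e i * e j = -(e j * e i) :=
  eq_neg_of_add_eq_zero_left
    (ExteriorAlgebra.ι_add_mul_swap (Pi.single i 1 : Fin 7 → ℝ) (Pi.single j 1))

lemma e_swap' {i j : Fin 7} (h : j < i) (x : ExteriorAlgebra ℝ (Fin 7 → ℝ)) :
    e i * (e j * x) = -(e j * (e i * x)) := by
  rw [← mul_assoc, e_swap h, neg_mul, mul_assoc]

/-- A linear functional on the exterior algebra that picks out the coefficient of
`e 1 ∧ e 2 ∧ e 3 ∧ e 4 ∧ e 5 ∧ e 6`. -/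
noncomputable def topF : ExteriorAlgebra ℝ (Fin 7 → ℝ) →ₗ[ℝ] ℝ :=
  ExteriorAlgebra.liftAlternating
    (Pi.single 6 ((Matrix.detRowAlternating (R := ℝ) (n := Fin 6)).compLinearMap
      (LinearMap.funLeft ℝ ℝ Fin.succ)))

lemma E_eq : e 1 * (e 2 * (e 3 * (e 4 * (e 5 * e 6))))
    = ExteriorAlgebra.ιMulti ℝ 6 (fun i : Fin 6 => Pi.single i.succ 1) := by
  rw [ExteriorAlgebra.ιMulti_apply]
  simp [List.ofFn_succ, e, mul_assoc,
    show ((0:Fin 6).succ = (1:Fin 7)) from rfl, show ((1:Fin 6).succ = (2:Fin 7)) from rfl,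
    show ((2:Fin 6).succ = (3:Fin 7)) from rfl, show ((3:Fin 6).succ = (4:Fin 7)) from rfl,
    show ((4:Fin 6).succ = (5:Fin 7)) from rfl, show ((5:Fin 6).succ = (6:Fin 7)) from rfl]

lemma topF_E : topF (e 1 * (e 2 * (e 3 * (e 4 * (e 5 * e 6))))) = 1 := by
  rw [E_eq, topF, ExteriorAlgebra.liftAlternating_apply_ιMulti, Pi.single_eq_same]
  rw [AlternatingMap.compLinearMap_apply]
  have h0 : (fun i : Fin 6 => LinearMap.funLeft ℝ ℝ Fin.succ (Pi.single i.succ 1))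
      = fun i : Fin 6 => (Pi.single i 1 : Fin 6 → ℝ) := by
    funext i j
    simp [LinearMap.funLeft, Pi.single_apply, Fin.succ_inj]
  rw [h0]
  have h1 : (fun i : Fin 6 => (Pi.single i 1 : Fin 6 → ℝ))
      = (1 : Matrix (Fin 6) (Fin 6) ℝ) := by
    funext i j; simp [Matrix.one_apply, Pi.single_apply, eq_comm]
  rw [h1]
  rw [← Matrix.det, Matrix.det_one]

lemma E_ne : e 1 * (e 2 * (e 3 * (e 4 * (e 5 * e 6)))) ≠ 0 := fun h => by
  have h1 := topF_E; rw [h, map_zero] at h1; exact zero_ne_one h1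

/-- **Lemma 5.16, (1) ⇔ (3).** For
`β = c₁·e₂∧e₃ + c₂·e₄∧e₅ + c₃·e₆∧e₇` and `ψ = *φ` the Hodge dual of the standard
`G₂` 3-form, one has `β∧β∧β = 6·(β∧ψ)` iff `c₁ + c₂ + c₃ = c₁c₂c₃`. -/
theorem dDT_diag_iff (c₁ c₂ c₃ : ℝ)
    (β ψ : ExteriorAlgebra ℝ (Fin 7 → ℝ))
    (hβ : β = c₁ • (e 1 * e 2) + c₂ • (e 3 * e 4) + c₃ • (e 5 * e 6))
    (hψ : ψ = e 3 * e 4 * e 5 * e 6 + e 1 * e 2 * e 5 * e 6 + e 1 * e 2 * e 3 * e 4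
      + e 0 * e 2 * e 4 * e 6 - e 0 * e 2 * e 3 * e 5 - e 0 * e 1 * e 4 * e 5
      - e 0 * e 1 * e 3 * e 6) :
    β * β * β = 6 * (β * ψ) ↔ c₁ + c₂ + c₃ = c₁ * c₂ * c₃ := by
  set E := e 1 * (e 2 * (e 3 * (e 4 * (e 5 * e 6)))) with hE
  have ha : β * β * β = (6 * (c₁ * c₂ * c₃)) • E := by
    subst hβ
    simp only [hE]
    simp (config := { decide := true }) [mul_add, add_mul, smul_mul_assoc, mul_smul_comm,
      smul_smul, mul_assoc, e_mul_self, e_mul_self', e_swap, e_swap', smul_neg, neg_neg,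
      mul_neg, neg_mul, ← add_smul]
    congr 1; ring
  have hb : β * ψ = (c₁ + c₂ + c₃) • E := by
    subst hβ hψ
    simp only [hE]
    simp (config := { decide := true }) [mul_add, add_mul, mul_sub, sub_mul, smul_mul_assoc,
      mul_smul_comm, smul_smul, mul_assoc, e_mul_self, e_mul_self', e_swap, e_swap', smul_neg,
      neg_neg, mul_neg, neg_mul, ← add_smul]
  have h6 : (6 : ExteriorAlgebra ℝ (Fin 7 → ℝ)) * ((c₁ + c₂ + c₃) • E)
      = (6 * (c₁ + c₂ + c₃)) • E := by
    rw [mul_smul_comm]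
    rw [show (6 : ExteriorAlgebra ℝ (Fin 7 → ℝ)) * E = (6 : ℝ) • E by
      rw [Algebra.smul_def, map_ofNat]]
    rw [smul_smul, mul_comm]
  rw [ha, hb, h6]
  constructor
  · intro h
    have h2 := smul_left_injective ℝ E_ne h
    linarith
  · intro h
    congr 1
    linarith
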